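/- If x, y ∈ ℝ² satisfy sup_{n ≥ 0} ‖F^{−n}(x) − F^{−n}(y)‖ < ∞ (the backward orbits of x and y stay at bounded distance), then H(y) − H(x) ∈ E^u, the unstable subspace of A. -/

import Mathlib

noncomputable section

abbrev E2 : Type := EuclideanSpace ℝ (Fin 2)

/-- Action of a real matrix on `ℝ²`. -/
def matActR (A : Matrix (Fin 2) (Fin 2) ℝ) (x : E2) : E2 :=
  (WithLp.equiv 2 (Fin 2 → ℝ)).symm (A.mulVec ((WithLp.equiv 2 (Fin 2 → ℝ)) x))

lemma matActR_comp (M N : Matrix (Fin 2) (Fin 2) ℝ) (v : E2) :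
    matActR M (matActR N v) = matActR (M * N) v := by
  simp only [matActR, Equiv.apply_symm_apply, Matrix.mulVec_mulVec]

lemma matActR_one (v : E2) : matActR 1 v = v := by
  simp [matActR]

lemma matActR_sub (M : Matrix (Fin 2) (Fin 2) ℝ) (u v : E2) :
    matActR M (u - v) = matActR M u - matActR M v := by
  ext i; fin_cases i <;> simp [matActR, Matrix.mulVec_sub]

/-- points whose backward orbits stay at bounded distance are mapped by `H`
to the same unstable line, i.e. `H y - H x` lies in the unstable subspace
`Eᵘ = {w : sup_{n ≥ 0} ‖A⁻ⁿ w‖ < ∞}` of `A`. -/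
theorem stmt_13 (A B : Matrix (Fin 2) (Fin 2) ℝ)
    (hAB : A * B = 1) (hBA : B * A = 1)
    (hhyp : ∀ μ : ℂ, (A.map (Complex.ofReal : ℝ → ℂ)).charpoly.IsRoot μ → ‖μ‖ ≠ 1)
    (F : E2 → E2) (hF : Function.Bijective F)
    (H : E2 → E2) (K : ℝ) (hH : ∀ x : E2, ‖H x - x‖ ≤ K)
    (hconj : ∀ x : E2, H (F x) = matActR A (H x))
    (x y : E2) (C : ℝ)
    (hxy : ∀ n : ℕ, ‖(Function.invFun F)^[n] x - (Function.invFun F)^[n] y‖ ≤ C) :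
    ∃ D : ℝ, ∀ n : ℕ, ‖matActR (B ^ n) (H y - H x)‖ ≤ D := by
  set g := Function.invFun F with hg
  have hFg : ∀ z : E2, F (g z) = z := fun z =>
    Function.rightInverse_invFun hF.surjective z
  -- B undoes A
  have hB : ∀ z : E2, matActR B (H z) = H (g z) := by
    intro z
    have h1 : H z = matActR A (H (g z)) := by
      conv_lhs => rw [← hFg z]
      exact hconj (g z)
    rw [h1, matActR_comp, hBA, matActR_one]
  have key : ∀ (n : ℕ) (z : E2), matActR (B ^ n) (H z) = H (g^[n] z) := by
    intro n
    induction n with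
    | zero => intro z; simpa using matActR_one (H z)
    | succ n ih =>
        intro z
        have : matActR (B ^ (n + 1)) (H z) = matActR (B ^ n) (matActR B (H z)) := by
          rw [matActR_comp, ← pow_succ]
        rw [this, hB, ih, ← Function.iterate_succ_apply]
  refine ⟨K + C + K, fun n => ?_⟩
  have heq : matActR (B ^ n) (H y - H x) = H (g^[n] y) - H (g^[n] x) := by
    rw [matActR_sub, key n y, key n x]
  rw [heq]
  set a := g^[n] y
  set b := g^[n] x
  have hdecomp : H a - H b = (H a - a) + (a - b) + (b - H b) := by abel
  calc ‖H a - H b‖ = ‖(H a - a) + (a - b) + (b - H b)‖ := by rw [hdecomp]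
    _ ≤ ‖(H a - a) + (a - b)‖ + ‖b - H b‖ := norm_add_le _ _
    _ ≤ ‖H a - a‖ + ‖a - b‖ + ‖b - H b‖ := by
        have := norm_add_le (H a - a) (a - b); linarith
    _ ≤ K + C + K := by
        have h1 := hH a
        have h2 : ‖a - b‖ ≤ C := by rw [norm_sub_rev]; exact hxy n
        have h3 : ‖b - H b‖ ≤ K := by rw [norm_sub_rev]; exact hH b
        linarith
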